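/- In any ergodic measure-preserving system, the maximal possible intensity of repelling is e^{-1}: for every set B of positive measure and every t ≥ 0, F_B(t) - (1 - e^{-t}) ≤ e^{-1} + μ(B), where F_B is the distribution function of the normalized hitting time. Equivalently, G_B(t) ≤ (1 - e^{-t}) + e^{-1} for all t ≥ 0, since G_B(t) ≤ min{t,1} and min{t,1} - (1 - e^{-t}) ≤ e^{-1} with equality at t = 1. -/

import Mathlib

open MeasureTheory ProbabilityTheory

/-- The first hitting/return time `min{i > 0 : T^i x ∈ B}`. -/
noncomputable def returnTime {X : Type*} (T : X → X) (B : Set X) (x : X) : ℕ :=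
  sInf {i | 0 < i ∧ T^[i] x ∈ B}

/-- Distribution function `F̃_B` of the normalized return time on `B`. -/
noncomputable def retDF {X : Type*} [MeasurableSpace X] (μ : Measure X) (T : X → X)
    (B : Set X) (t : ℝ) : ℝ :=
  ((ProbabilityTheory.cond μ B)
    {y | (μ B).toReal * (returnTime T B y : ℝ) ≤ t}).toReal

/-- Distribution function `F_B` of the normalized hitting time `μ(B)·V_B`. -/
noncomputable def hitDF {X : Type*} [MeasurableSpace X] (μ : Measure X) (T : X → X)
    (B : Set X) (t : ℝ) : ℝ :=
  (μ {x | (μ B).toReal * (returnTime T B x : ℝ) ≤ t}).toReal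

/-- `G_B(t) = ∫₀ᵗ (1 - F̃_B(s)) ds`. -/
noncomputable def GB {X : Type*} [MeasurableSpace X] (μ : Measure X) (T : X → X)
    (B : Set X) (t : ℝ) : ℝ :=
  ∫ s in (0 : ℝ)..t, (1 - retDF μ T B s)

set_option linter.unusedSectionVars false
set_option linter.unusedVariables false

section Aux

variable {X : Type*} [MeasurableSpace X] (μ : Measure X) (T : X → X) (B : Set X)

/-- the set of points never hitting `B` at a positive time -/
def neverSet (T : X → X) (B : Set X) : Set X := {x | ∀ i, 0 < i → T^[i] x ∉ B}

lemma neverSet_measurable (hTm : Measurable T) (hB : MeasurableSet B) :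
    MeasurableSet (neverSet T B) := by
  have : neverSet T B = ⋂ i, ⋂ (_ : 0 < i), (T^[i]) ⁻¹' Bᶜ := by
    ext x; simp [neverSet]
  rw [this]
  exact MeasurableSet.iInter fun i => MeasurableSet.iInter fun _ =>
    hB.compl.preimage (hTm.iterate i)

lemma returnTime_le_set_eq (n : ℕ) :
    {x | returnTime T B x ≤ n} =
      neverSet T B ∪ ⋃ i ∈ Finset.Icc 1 n, (T^[i]) ⁻¹' B := by
  ext x
  simp only [Set.mem_setOf_eq, Set.mem_union, Set.mem_iUnion, Set.mem_preimage,
    Finset.mem_Icc, neverSet]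
  constructor
  · intro h
    by_cases hS : {i | 0 < i ∧ T^[i] x ∈ B}.Nonempty
    · have hmem := Nat.sInf_mem hS
      exact Or.inr ⟨returnTime T B x, ⟨⟨hmem.1, h⟩, hmem.2⟩⟩
    · exact Or.inl fun i hi hm => hS ⟨i, hi, hm⟩
  · rintro (h | ⟨i, ⟨h1, h2⟩, hmem⟩)
    · have he : {i | 0 < i ∧ T^[i] x ∈ B} = ∅ := by
        ext i; simp only [Set.mem_setOf_eq, Set.mem_empty_iff_false, iff_false, not_and]
        exact fun hi => h i hi
      simp [returnTime, he]
    · exact le_trans (Nat.sInf_le ⟨h1, hmem⟩) h2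

lemma returnTime_le_measurable (hTm : Measurable T) (hB : MeasurableSet B) (n : ℕ) :
    MeasurableSet {x | returnTime T B x ≤ n} := by
  rw [returnTime_le_set_eq]
  exact (neverSet_measurable T B hTm hB).union <|
    (Finset.Icc 1 n).measurableSet_biUnion fun i _ => hB.preimage (hTm.iterate i)

lemma neverSet_null [IsProbabilityMeasure μ] (hT : Ergodic T μ) (hB : MeasurableSet B)
    (hpos : 0 < μ B) : μ (neverSet T B) = 0 := by
  set E : Set X := ⋃ i : ℕ, (T^[i + 1]) ⁻¹' B with hE
  have hEm : MeasurableSet E :=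
    MeasurableSet.iUnion fun i => hB.preimage (hT.measurable.iterate (i + 1))
  have hsub : T ⁻¹' E ⊆ E := by
    rintro x hx
    simp only [hE, Set.mem_preimage, Set.mem_iUnion] at hx ⊢
    obtain ⟨i, hi⟩ := hx
    exact ⟨i + 1, by rwa [Function.iterate_succ_apply]⟩
  have := hT.ae_empty_or_univ_of_preimage_ae_le hEm.nullMeasurableSet hsub.eventuallyLE
  rcases this with h | h
  · exfalso
    have h0 : μ E = 0 := MeasureTheory.ae_eq_empty.mp h
    have hle : μ B ≤ μ E := by
      have hs : (T^[1]) ⁻¹' B ⊆ E := Set.subset_iUnion (fun i : ℕ => (T^[i+1]) ⁻¹' B) 0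
      calc μ B = μ ((T^[1]) ⁻¹' B) :=
            ((hT.toMeasurePreserving.iterate 1).measure_preimage hB.nullMeasurableSet).symm
        _ ≤ μ E := measure_mono hs
    exact absurd (le_trans hle h0.le) (not_le.mpr hpos)
  · have hc : μ Eᶜ = 0 := MeasureTheory.ae_eq_univ.mp h
    have hsub2 : neverSet T B ⊆ Eᶜ := by
      intro x hx
      simp only [hE, Set.mem_compl_iff, Set.mem_iUnion, Set.mem_preimage, not_exists]
      exact fun i => hx (i + 1) (Nat.succ_pos i)
    exact measure_mono_null hsub2 hc

/-- points that do not visit `B` at times `1..n` -/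
def kacC (T : X → X) (B : Set X) (n : ℕ) : Set X := {x | ∀ i, 1 ≤ i → i ≤ n → T^[i] x ∉ B}

lemma kacC_zero : kacC T B 0 = Set.univ := by
  ext x; simp only [kacC, Set.mem_setOf_eq, Set.mem_univ, iff_true]
  intro i h1 h0; omega

lemma kacC_measurable (hTm : Measurable T) (hB : MeasurableSet B) (n : ℕ) :
    MeasurableSet (kacC T B n) := by
  have : kacC T B n = ⋂ i, ⋂ (_ : 1 ≤ i), ⋂ (_ : i ≤ n), (T^[i]) ⁻¹' Bᶜ := by
    ext x; simp [kacC]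
  rw [this]
  exact .iInter fun i => .iInter fun _ => .iInter fun _ => (hB.compl.preimage (hTm.iterate i))

lemma kacC_preimage (n : ℕ) :
    T ⁻¹' (kacC T B n) = kacC T B (n + 1) ∪ T ⁻¹' (B ∩ kacC T B n) := by
  ext x
  simp only [Set.mem_preimage, Set.mem_union, Set.mem_inter_iff, kacC, Set.mem_setOf_eq]
  constructor
  · intro h
    by_cases hTx : T x ∈ B
    · exact Or.inr ⟨hTx, h⟩
    · refine Or.inl fun i h1 hn => ?_
      rcases Nat.lt_or_ge i 2 with hi | hi
      · interval_cases i
        · simpa using hTx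
      · have h1' : i - 1 ≥ 1 := by omega
        have h2 : T^[i - 1] (T x) ∉ B := h (i - 1) h1' (by omega)
        rwa [← Function.iterate_succ_apply, Nat.succ_eq_add_one,
          Nat.sub_add_cancel (by omega)] at h2
  · rintro (h | ⟨_, h⟩)
    · intro i h1 hn
      have := h (i + 1) (by omega) (by omega)
      rwa [Function.iterate_succ_apply] at this
    · exact h

lemma kacC_disjoint (n : ℕ) :
    Disjoint (kacC T B (n + 1)) (T ⁻¹' (B ∩ kacC T B n)) := by
  rw [Set.disjoint_left]
  intro x hx hx'
  simp only [Set.mem_preimage, Set.mem_inter_iff] at hx'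
  have := hx 1 le_rfl (by omega)
  simp only [Function.iterate_one] at this
  exact this hx'.1

lemma kac_step [IsProbabilityMeasure μ] (hT : Ergodic T μ) (hB : MeasurableSet B) (n : ℕ) :
    μ (kacC T B n) = μ (kacC T B (n + 1)) + μ (B ∩ kacC T B n) := by
  have hCm := kacC_measurable T B hT.measurable hB
  have h1 : μ (kacC T B n) = μ (T ⁻¹' (kacC T B n)) :=
    (hT.toMeasurePreserving.measure_preimage (hCm n).nullMeasurableSet).symm
  rw [h1, kacC_preimage,
    measure_union (kacC_disjoint T B n) ((hB.inter (hCm n)).preimage hT.measurable),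
    hT.toMeasurePreserving.measure_preimage (hB.inter (hCm n)).nullMeasurableSet]

lemma kac_sum [IsProbabilityMeasure μ] (hT : Ergodic T μ) (hB : MeasurableSet B) (M : ℕ) :
    ∑ n ∈ Finset.range M, (μ (B ∩ kacC T B n)).toReal ≤ 1 := by
  have key : ∀ M : ℕ, ∑ n ∈ Finset.range M, (μ (B ∩ kacC T B n)).toReal
      + (μ (kacC T B M)).toReal = 1 := by
    intro M
    induction M with
    | zero => simp [kacC_zero]
    | succ M ih =>
      rw [Finset.sum_range_succ]
      have hstep := kac_step μ T B hT hB M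
      have h2 : (μ (kacC T B M)).toReal
          = (μ (kacC T B (M + 1))).toReal + (μ (B ∩ kacC T B M)).toReal := by
        rw [hstep, ENNReal.toReal_add (measure_ne_top _ _) (measure_ne_top _ _)]
      linarith
  have h1 := key M
  have h2 : 0 ≤ (μ (kacC T B M)).toReal := ENNReal.toReal_nonneg
  linarith

lemma not_returnTime_le_subset_kacC (n : ℕ) :
    B ∩ {x | ¬ returnTime T B x ≤ n} ⊆ B ∩ kacC T B n := by
  rintro x ⟨hxB, hx⟩
  refine ⟨hxB, fun i h1 hn hiB => ?_⟩
  exact hx (le_trans (Nat.sInf_le ⟨by omega, hiB⟩) hn)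

end Aux

section RetDF
variable {X : Type*} [MeasurableSpace X] (μ : Measure X) [IsProbabilityMeasure μ]
  (T : X → X) (B : Set X)

lemma retDF_mono (hpos : 0 < μ B) : Monotone (retDF μ T B) := by
  intro s s' hss
  haveI : IsProbabilityMeasure (ProbabilityTheory.cond μ B) :=
    cond_isProbabilityMeasure hpos.ne'
  exact ENNReal.toReal_mono (measure_ne_top _ _)
    (measure_mono fun y hy => le_trans hy hss)

lemma retDF_nonneg (s : ℝ) : 0 ≤ retDF μ T B s := ENNReal.toReal_nonneg

lemma retDF_le_one (hpos : 0 < μ B) (s : ℝ) : retDF μ T B s ≤ 1 := by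
  haveI : IsProbabilityMeasure (ProbabilityTheory.cond μ B) :=
    cond_isProbabilityMeasure hpos.ne'
  have := ENNReal.toReal_mono (measure_ne_top (ProbabilityTheory.cond μ B) Set.univ)
    (measure_mono (Set.subset_univ {y | (μ B).toReal * (returnTime T B y : ℝ) ≤ s}))
  simpa [retDF] using this

/-- key tail estimate -/
lemma retDF_tail (hT : Measurable T) (hB : MeasurableSet B) (hpos : 0 < μ B) (n : ℕ) (s : ℝ)
    (hs : (n : ℝ) * (μ B).toReal ≤ s) :
    1 - retDF μ T B s ≤ (μ (B ∩ kacC T B n)).toReal / (μ B).toReal := by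
  set m := (μ B).toReal with hm
  have hm0 : 0 < m := ENNReal.toReal_pos hpos.ne' (measure_ne_top μ B)
  haveI : IsProbabilityMeasure (ProbabilityTheory.cond μ B) :=
    cond_isProbabilityMeasure hpos.ne'
  set ν := ProbabilityTheory.cond μ B with hν
  have hsub : {y | returnTime T B y ≤ n} ⊆ {y | m * (returnTime T B y : ℝ) ≤ s} := by
    intro y hy
    simp only [Set.mem_setOf_eq] at hy ⊢
    calc m * (returnTime T B y : ℝ) ≤ m * n := by
          apply mul_le_mul_of_nonneg_left _ hm0.le
          exact_mod_cast hy
      _ = (n : ℝ) * m := by ring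
      _ ≤ s := hs
  have h1 : (ν {y | returnTime T B y ≤ n}).toReal ≤ retDF μ T B s :=
    ENNReal.toReal_mono (measure_ne_top _ _) (measure_mono hsub)
  have hmeas := returnTime_le_measurable T B hT hB n
  have h2 : (ν {y | returnTime T B y ≤ n}).toReal
      + (ν {y | returnTime T B y ≤ n}ᶜ).toReal = 1 := by
    have hcompl := measure_add_measure_compl (μ := ν) hmeas
    rw [measure_univ] at hcompl
    calc (ν {y | returnTime T B y ≤ n}).toReal + (ν {y | returnTime T B y ≤ n}ᶜ).toReal
        = (ν {y | returnTime T B y ≤ n} + ν {y | returnTime T B y ≤ n}ᶜ).toReal :=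
          (ENNReal.toReal_add (measure_ne_top _ _) (measure_ne_top _ _)).symm
      _ = 1 := by rw [hcompl]; simp
  have h3 : (ν {y | returnTime T B y ≤ n}ᶜ).toReal
      ≤ (μ (B ∩ kacC T B n)).toReal / m := by
    have happ : ν {y | returnTime T B y ≤ n}ᶜ
        = (μ B)⁻¹ * μ (B ∩ {y | returnTime T B y ≤ n}ᶜ) := cond_apply hB μ _
    have hceq : {y | returnTime T B y ≤ n}ᶜ = {x | ¬ returnTime T B x ≤ n} := by
      ext x; simp
    have hle : μ (B ∩ {y | returnTime T B y ≤ n}ᶜ) ≤ μ (B ∩ kacC T B n) := by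
      rw [hceq]
      exact measure_mono (not_returnTime_le_subset_kacC T B n)
    calc (ν {y | returnTime T B y ≤ n}ᶜ).toReal
        = ((μ B)⁻¹ * μ (B ∩ {y | returnTime T B y ≤ n}ᶜ)).toReal := by rw [happ]
      _ = (μ B)⁻¹.toReal * (μ (B ∩ {y | returnTime T B y ≤ n}ᶜ)).toReal := by
          rw [ENNReal.toReal_mul]
      _ ≤ (μ B)⁻¹.toReal * (μ (B ∩ kacC T B n)).toReal := by
          apply mul_le_mul_of_nonneg_left _ ENNReal.toReal_nonneg
          exact ENNReal.toReal_mono (measure_ne_top _ _) hle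
      _ = (μ (B ∩ kacC T B n)).toReal / m := by
          rw [ENNReal.toReal_inv, hm, div_eq_inv_mul]
  linarith

lemma GB_le_min (hT : Ergodic T μ) (hB : MeasurableSet B) (hpos : 0 < μ B)
    (t : ℝ) (ht : 0 ≤ t) : GB μ T B t ≤ min t 1 := by
  set m := (μ B).toReal with hm
  have hm0 : 0 < m := ENNReal.toReal_pos hpos.ne' (measure_ne_top μ B)
  set f : ℝ → ℝ := fun s => 1 - retDF μ T B s with hf
  have hanti : Antitone f := fun s s' hss => by
    have := retDF_mono μ T B hpos hss
    simp only [hf]; linarith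
  have hint : ∀ a b : ℝ, IntervalIntegrable f MeasureTheory.volume a b := fun a b =>
    hanti.intervalIntegrable
  have hf_nonneg : ∀ s, 0 ≤ f s := fun s => by
    have := retDF_le_one μ T B hpos s; simp only [hf]; linarith
  have hf_le_one : ∀ s, f s ≤ 1 := fun s => by
    have := retDF_nonneg μ T B s; simp only [hf]; linarith
  have hGB : ∀ u : ℝ, GB μ T B u = ∫ s in (0:ℝ)..u, f s := fun u => rfl
  have hle_t : GB μ T B t ≤ t := by
    rw [hGB]
    calc ∫ s in (0:ℝ)..t, f s ≤ ∫ s in (0:ℝ)..t, (1:ℝ) :=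
          intervalIntegral.integral_mono ht (hint 0 t) intervalIntegrable_const hf_le_one
      _ = t := by simp
  have hle_one : GB μ T B t ≤ 1 := by
    set M : ℕ := ⌈t / m⌉₊ with hM
    have htM : t ≤ (M : ℝ) * m := by
      have h1 : t / m ≤ (M : ℝ) := Nat.le_ceil _
      calc t = (t / m) * m := by field_simp
        _ ≤ (M : ℝ) * m := by
            apply mul_le_mul_of_nonneg_right h1 hm0.le
    set a : ℕ → ℝ := fun n => (n : ℝ) * m with ha
    have ha0 : a 0 = 0 := by simp [ha]
    have hmono : GB μ T B t ≤ GB μ T B (a M) := by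
      rw [hGB, hGB]
      have hsplit : (∫ s in (0:ℝ)..t, f s) + (∫ s in t..(a M), f s)
          = ∫ s in (0:ℝ)..(a M), f s :=
        intervalIntegral.integral_add_adjacent_intervals (hint 0 t) (hint t (a M))
      have hpos2 : 0 ≤ ∫ s in t..(a M), f s := by
        apply intervalIntegral.integral_nonneg (by simpa [ha] using htM)
        intro x hx; exact hf_nonneg x
      linarith
    have hsum : GB μ T B (a M) = ∑ n ∈ Finset.range M, ∫ s in (a n)..(a (n+1)), f s := by
      rw [hGB, ← ha0]
      exact (intervalIntegral.sum_integral_adjacent_intervals fun k _ => hint _ _).symm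
    have hterm : ∀ n ∈ Finset.range M,
        (∫ s in (a n)..(a (n+1)), f s) ≤ (μ (B ∩ kacC T B n)).toReal := by
      intro n _
      set c : ℝ := (μ (B ∩ kacC T B n)).toReal / m with hc
      have hab : a n ≤ a (n+1) := by
        simp only [ha]
        apply mul_le_mul_of_nonneg_right _ hm0.le
        exact_mod_cast Nat.le_succ n
      calc (∫ s in (a n)..(a (n+1)), f s) ≤ ∫ s in (a n)..(a (n+1)), c := by
            apply intervalIntegral.integral_mono_on hab (hint _ _) intervalIntegrable_const
            intro x hx
            exact retDF_tail μ T B hT.measurable hB hpos n x hx.1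
        _ = (a (n+1) - a n) * c := by rw [intervalIntegral.integral_const, smul_eq_mul]
        _ = m * c := by
            congr 1
            simp only [ha]; push_cast; ring
        _ = (μ (B ∩ kacC T B n)).toReal := by
            rw [hc]; field_simp
    calc GB μ T B t ≤ GB μ T B (a M) := hmono
      _ = ∑ n ∈ Finset.range M, ∫ s in (a n)..(a (n+1)), f s := hsum
      _ ≤ ∑ n ∈ Finset.range M, (μ (B ∩ kacC T B n)).toReal := Finset.sum_le_sum hterm
      _ ≤ 1 := kac_sum μ T B hT hB M
  exact le_min hle_t hle_one

lemma hitDF_le_min (hT : Ergodic T μ) (hB : MeasurableSet B) (hpos : 0 < μ B)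
    (t : ℝ) (ht : 0 ≤ t) : hitDF μ T B t ≤ min t 1 := by
  set m := (μ B).toReal with hm
  have hm0 : 0 < m := ENNReal.toReal_pos hpos.ne' (measure_ne_top μ B)
  refine le_min ?_ ?_
  · set N : ℕ := ⌊t / m⌋₊ with hN
    have hsub : {x | m * (returnTime T B x : ℝ) ≤ t} ⊆
        neverSet T B ∪ ⋃ i ∈ Finset.Icc 1 N, (T^[i]) ⁻¹' B := by
      intro x hx
      rw [← returnTime_le_set_eq]
      simp only [Set.mem_setOf_eq] at hx ⊢
      apply Nat.le_floor
      rw [le_div_iff₀ hm0]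
      linarith [hx]
    have hμ : μ {x | m * (returnTime T B x : ℝ) ≤ t} ≤ (N : ENNReal) * μ B := by
      calc μ {x | m * (returnTime T B x : ℝ) ≤ t}
          ≤ μ (neverSet T B) + μ (⋃ i ∈ Finset.Icc 1 N, (T^[i]) ⁻¹' B) := by
            exact le_trans (measure_mono hsub) (measure_union_le _ _)
        _ = μ (⋃ i ∈ Finset.Icc 1 N, (T^[i]) ⁻¹' B) := by
            rw [neverSet_null μ T B hT hB hpos, zero_add]
        _ ≤ ∑ i ∈ Finset.Icc 1 N, μ ((T^[i]) ⁻¹' B) := measure_biUnion_finset_le _ _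
        _ = ∑ i ∈ Finset.Icc 1 N, μ B := by
            apply Finset.sum_congr rfl
            intro i _
            exact (hT.toMeasurePreserving.iterate i).measure_preimage hB.nullMeasurableSet
        _ = (N : ENNReal) * μ B := by
            rw [Finset.sum_const, Nat.card_Icc]
            simp [nsmul_eq_mul]
    have hfin : ((N : ENNReal) * μ B) ≠ ⊤ :=
      ENNReal.mul_ne_top (ENNReal.natCast_ne_top N) (measure_ne_top μ B)
    calc hitDF μ T B t ≤ ((N : ENNReal) * μ B).toReal := ENNReal.toReal_mono hfin hμ
      _ = (N : ℝ) * m := by rw [ENNReal.toReal_mul]; simp [hm]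
      _ ≤ (t / m) * m := by
          apply mul_le_mul_of_nonneg_right _ hm0.le
          exact Nat.floor_le (by positivity)
      _ = t := by field_simp
  · have h1 : μ {x | m * (returnTime T B x : ℝ) ≤ t} ≤ 1 := prob_le_one
    have h2 := ENNReal.toReal_mono (by simp : (1 : ENNReal) ≠ ⊤) h1
    simpa [hitDF] using h2

end RetDF

lemma min_sub_le_exp (t : ℝ) (ht : 0 ≤ t) :
    min t 1 - (1 - Real.exp (-t)) ≤ Real.exp (-1) := by
  rcases le_total t 1 with h | h
  · rw [min_eq_left h]
    have he : Real.exp (-t) * Real.exp (t - 1) = Real.exp (-1) := by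
      rw [← Real.exp_add]; ring_nf
    have hE1 : Real.exp (-t) ≤ 1 := Real.exp_le_one_iff.mpr (by linarith)
    have hF1 : Real.exp (t - 1) ≤ 1 := Real.exp_le_one_iff.mpr (by linarith)
    have hF : t ≤ Real.exp (t - 1) := by
      have := Real.add_one_le_exp (t - 1); linarith
    nlinarith [mul_nonneg (sub_nonneg.2 hE1) (sub_nonneg.2 hF1)]
  · rw [min_eq_right h]
    have : Real.exp (-t) ≤ Real.exp (-1) := Real.exp_le_exp.mpr (by linarith)
    linarith

/-- The maximal possible intensity of repelling is `e^{-1}`: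
`F_B(t) - (1 - e^{-t}) ≤ e^{-1} + μ(B)` and `G_B(t) ≤ (1 - e^{-t}) + e^{-1}`
for all `t ≥ 0`, and `min{t,1} - (1 - e^{-t}) ≤ e^{-1}`. -/
theorem stmt9 {X : Type*} [MeasurableSpace X] (μ : Measure X) [IsProbabilityMeasure μ]
    (T : X → X) (hT : Ergodic T μ) (B : Set X) (hB : MeasurableSet B) (hpos : 0 < μ B) :
    ∀ t : ℝ, 0 ≤ t →
      hitDF μ T B t - (1 - Real.exp (-t)) ≤ Real.exp (-1) + (μ B).toReal ∧
      GB μ T B t ≤ (1 - Real.exp (-t)) + Real.exp (-1) ∧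
      min t 1 - (1 - Real.exp (-t)) ≤ Real.exp (-1) := by
  intro t ht
  have h3 := min_sub_le_exp t ht
  have hhit := hitDF_le_min μ T B hT hB hpos t ht
  have hGB := GB_le_min μ T B hT hB hpos t ht
  have hm0 : 0 ≤ (μ B).toReal := ENNReal.toReal_nonneg
  refine ⟨by linarith, by linarith, h3⟩
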